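/- If G is a finite group and K is a normal subgroup of G contained in the hypercenter Z*(G), then for every x ∈ G, the nilpotentizer of xK in G/K equals nil_G(x)/K, i.e., yK ∈ nil_{G/K}(xK) if and only if y' ∈ nil_G(x) for some (equivalently, every) representative y' of yK. -/

import Mathlib

def nilizer {G : Type*} [Group G] (x : G) : Set G :=
  {g | Group.IsNilpotent (Subgroup.closure ({x, g} : Set G))}

def nilSet (G : Type*) [Group G] : Set G :=
  {x | ∀ y : G, Group.IsNilpotent (Subgroup.closure ({x, y} : Set G))}

section

open Subgroup QuotientGroup

/-- Elements of the `n`-th upper central series of `G` lying in a subgroup `H`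
lie in the `n`-th upper central series of `H`. -/
lemma ucs_inter_le {G : Type*} [Group G] (H : Subgroup G) :
    ∀ n : ℕ, ∀ h : H, (h : G) ∈ Subgroup.upperCentralSeries G n → h ∈ Subgroup.upperCentralSeries H n := by
  intro n
  induction n with
  | zero =>
    intro h hh
    rw [Subgroup.upperCentralSeries_zero, Subgroup.mem_bot] at hh ⊢
    exact OneMemClass.coe_eq_one.mp hh
  | succ n ih =>
    intro h hh
    rw [Subgroup.mem_upperCentralSeries_succ_iff] at hh ⊢
    intro y
    exact ih _ (hh (y : G))

/-- Descent: if the `c`-th lower central series term is inside the `n`-th upper central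
series term, then the `(c+n)`-th lower central series term is trivial. -/
lemma lcs_descent {G : Type*} [Group G] :
    ∀ n c : ℕ, Subgroup.lowerCentralSeries (⊤ : Subgroup G) c ≤ Subgroup.upperCentralSeries G n →
      Subgroup.lowerCentralSeries (⊤ : Subgroup G) (c + n) = ⊥ := by
  intro n
  induction n with
  | zero =>
    intro c hc
    simpa using le_antisymm (by simpa using hc) bot_le
  | succ n ih =>
    intro c hc
    have step : Subgroup.lowerCentralSeries (⊤ : Subgroup G) (c + 1) ≤ Subgroup.upperCentralSeries G n := by
      rw [Subgroup.lowerCentralSeries_succ, Subgroup.commutator_def]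
      rw [Subgroup.closure_le]
      rintro x ⟨p, hp, q, -, rfl⟩
      have hp' := hc hp
      rw [Subgroup.mem_upperCentralSeries_succ_iff] at hp'
      exact hp' q
    have := ih (c + 1) step
    rw [show c + (n + 1) = (c + 1) + n by omega]
    exact this

/-- If `N` is a normal subgroup contained in some term of the upper central series of `G`
and `G ⧸ N` is nilpotent, then `G` is nilpotent. -/
lemma nilpotent_of_quotient_hypercenter {G : Type*} [Group G] (N : Subgroup G) [N.Normal]
    {n : ℕ} (hN : N ≤ Subgroup.upperCentralSeries G n) (hq : Group.IsNilpotent (G ⧸ N)) :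
    Group.IsNilpotent G := by
  obtain ⟨c, hc⟩ := Subgroup.nilpotent_iff_lowerCentralSeries.mp hq
  have hle : Subgroup.lowerCentralSeries (⊤ : Subgroup G) c ≤ N := by
    intro g hg
    have : (QuotientGroup.mk' N) g ∈ Subgroup.lowerCentralSeries (⊤ : Subgroup (G ⧸ N)) c := by
      apply lowerCentralSeries.map (QuotientGroup.mk' N) c
      exact Subgroup.mem_map_of_mem _ hg
    rw [hc, Subgroup.mem_bot] at this
    exact (QuotientGroup.eq_one_iff g).mp this
  exact Subgroup.nilpotent_iff_lowerCentralSeries.mpr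
    ⟨c + n, lcs_descent n c (hle.trans hN)⟩

end

theorem stmt1 {G : Type*} [Group G] [Finite G] (K : Subgroup G) [K.Normal]
    (hK : K ≤ ⨆ n : ℕ, upperCentralSeries G n) (x y : G) :
    (QuotientGroup.mk y : G ⧸ K) ∈ nilizer (QuotientGroup.mk x : G ⧸ K) ↔ y ∈ nilizer x := by
  -- first, find a uniform n with K ≤ Subgroup.upperCentralSeries G n
  have hKn : ∃ n : ℕ, K ≤ Subgroup.upperCentralSeries G n := by
    have hdir : Directed (· ≤ ·) (Subgroup.upperCentralSeries G) :=
      Monotone.directed_le (Subgroup.upperCentralSeries_mono G)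
    have hmem : ∀ k : K, ∃ n : ℕ, (k : G) ∈ Subgroup.upperCentralSeries G n := fun k =>
      (Subgroup.mem_iSup_of_directed hdir).mp (hK k.2)
    haveI : Fintype K := Fintype.ofFinite K
    refine ⟨Finset.univ.sup (fun k : K => (hmem k).choose), fun g hg => ?_⟩
    have h1 := (hmem ⟨g, hg⟩).choose_spec
    exact Subgroup.upperCentralSeries_mono G
      (Finset.le_sup (f := fun k : K => (hmem k).choose) (Finset.mem_univ (⟨g, hg⟩ : K))) h1
  obtain ⟨n, hKn⟩ := hKn
  -- the closure in the quotient is the image of the closure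
  have himg : Subgroup.closure ({(QuotientGroup.mk x : G ⧸ K), QuotientGroup.mk y} : Set (G ⧸ K))
      = Subgroup.map (QuotientGroup.mk' K) (Subgroup.closure ({x, y} : Set G)) := by
    rw [MonoidHom.map_closure]
    congr 1
    simp [Set.image_insert_eq]
  set H : Subgroup G := Subgroup.closure ({x, y} : Set G) with hH
  constructor
  · -- quotient nilpotent → original nilpotent
    intro hnil
    simp only [nilizer, Set.mem_setOf_eq] at hnil ⊢
    rw [himg] at hnil
    -- consider the restriction of mk' K to H
    let f : H →* G ⧸ K := (QuotientGroup.mk' K).comp H.subtype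
    have hker : f.ker ≤ Subgroup.upperCentralSeries H n := by
      intro h hh
      have : (h : G) ∈ K := by
        simpa [f, QuotientGroup.eq_one_iff] using hh
      exact ucs_inter_le H n h (hKn this)
    have hrange : f.range = Subgroup.map (QuotientGroup.mk' K) H := by
      rw [MonoidHom.range_comp, Subgroup.range_subtype]
    have hrangenil : Group.IsNilpotent f.range := by
      rw [hrange]; exact hnil
    have hqnil : Group.IsNilpotent (H ⧸ f.ker) :=
      nilpotent_of_mulEquiv (QuotientGroup.quotientKerEquivRange f).symm
    exact nilpotent_of_quotient_hypercenter f.ker hker hqnil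
  · -- original nilpotent → quotient nilpotent
    intro hnil
    simp only [nilizer, Set.mem_setOf_eq] at hnil ⊢
    rw [himg]
    let f : H →* G ⧸ K := (QuotientGroup.mk' K).comp H.subtype
    have hrange : f.range = Subgroup.map (QuotientGroup.mk' K) H := by
      rw [MonoidHom.range_comp, Subgroup.range_subtype]
    haveI : Group.IsNilpotent H := hnil
    have : Group.IsNilpotent f.range :=
      nilpotent_of_surjective f.rangeRestrict f.rangeRestrict_surjective
    rwa [hrange] at this
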